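/- Let (i,j,k) be a cyclic permutation of (1,2,3). (a) If θ ∈ ℂ⁴ has θ₁ = θ₂ = θ₃ = 0 and θ₄ = −4, then the fixed-point set of g_j² on S(θ), namely {x ∈ ℂ³ : f(x,θ) = 0, y_j(x,θ) = 0, y_k(x,θ) = 0}, equals the disjoint union of the two lines ℓ_j⁺ = {x : x_i = 2, x_j + x_k = 0} and ℓ_j⁻ = {x : x_i = −2, x_j − x_k = 0}. (b) For arbitrary θ ∈ ℂ⁴, the quartic Q(s) has a multiple root at s = 2 and a multiple root at s = −2 (i.e. Q(2) = Q′(2) = Q(−2) = Q′(−2) = 0) if and only if θ_i = θ_j = θ_k = 0 and θ₄ = −4. -/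

import Mathlib

/-- The quartic polynomial attached to `θ` and the cyclic permutation `(i,j,k)`. -/
noncomputable def quartic (θi θj θk θ4 : ℂ) : ℂ → ℂ :=
  fun s => s ^ 4 - θi * s ^ 3 + (θ4 - 4) * s ^ 2 + (4 * θi - θj * θk) * s
    + θj ^ 2 + θk ^ 2 - 4 * θ4

lemma deriv_quartic (θi θj θk θ4 s : ℂ) :
    deriv (quartic θi θj θk θ4) s
      = 4 * s ^ 3 - 3 * θi * s ^ 2 + 2 * (θ4 - 4) * s + (4 * θi - θj * θk) := by
  have h : HasDerivAt (quartic θi θj θk θ4)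
      (4 * s ^ 3 - 3 * θi * s ^ 2 + 2 * (θ4 - 4) * s + (4 * θi - θj * θk)) s := by
    unfold quartic
    have := (((((hasDerivAt_pow 4 s).sub
      ((hasDerivAt_pow 3 s).const_mul θi)).add
      (((hasDerivAt_pow 2 s).const_mul (θ4 - 4)))).add
      ((hasDerivAt_id s).const_mul (4 * θi - θj * θk))).add_const (θj ^ 2)).add_const (θk ^ 2)
    have h2 := this.sub_const (4 * θ4)
    convert h2 using 1
    all_goals first | rfl | (norm_num; ring)
  exact h.deriv

/-- (a) For `θ = (0,0,0,−4)` the fixed-point set of `g_j²` on `S(θ)` is the disjoint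
union of the two lines `ℓ_j⁺ = {x_i = 2, x_j + x_k = 0}` and
`ℓ_j⁻ = {x_i = −2, x_j − x_k = 0}`.
(b) For arbitrary `θ`, the quartic has multiple roots at both `s = 2` and `s = −2`
if and only if `θ_i = θ_j = θ_k = 0` and `θ₄ = −4`. -/
theorem fixed_point_set_A1_four_and_multiple_roots :
    (∀ xi xj xk : ℂ,
      ((xi * xj * xk + xi ^ 2 + xj ^ 2 + xk ^ 2 + (-4 : ℂ) = 0 ∧
        2 * xj + xk * xi = 0 ∧ 2 * xk + xi * xj = 0) ↔
        ((xi = 2 ∧ xj + xk = 0) ∨ (xi = -2 ∧ xj - xk = 0))) ∧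
      ¬((xi = 2 ∧ xj + xk = 0) ∧ (xi = -2 ∧ xj - xk = 0))) ∧
    (∀ θi θj θk θ4 : ℂ,
      (quartic θi θj θk θ4 2 = 0 ∧ deriv (quartic θi θj θk θ4) 2 = 0 ∧
       quartic θi θj θk θ4 (-2) = 0 ∧ deriv (quartic θi θj θk θ4) (-2) = 0) ↔
      (θi = 0 ∧ θj = 0 ∧ θk = 0 ∧ θ4 = -4)) := by
  constructor
  · intro xi xj xk
    constructor
    · constructor
      · rintro ⟨hf, h1, h2⟩
        have hA : (xj + xk) * (2 + xi) = 0 := by linear_combination h1 + h2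
        have hB : (xj - xk) * (2 - xi) = 0 := by linear_combination h1 - h2
        rcases mul_eq_zero.mp hA with hA' | hA'
        · rcases mul_eq_zero.mp hB with hB' | hB'
          · have hj : xj = 0 := by linear_combination (hA' + hB') / 2
            have hk : xk = 0 := by linear_combination (hA' - hB') / 2
            have hx : (xi - 2) * (xi + 2) = 0 := by
              linear_combination hf - (xi * xk + xj) * hj - xk * hk
            rcases mul_eq_zero.mp hx with hx' | hx'
            · exact Or.inl ⟨by linear_combination hx', hA'⟩
            · exact Or.inr ⟨by linear_combination hx', hB'⟩
          · exact Or.inl ⟨by linear_combination -hB', hA'⟩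
        · rcases mul_eq_zero.mp hB with hB' | hB'
          · exact Or.inr ⟨by linear_combination hA', hB'⟩
          · exfalso
            have : (4 : ℂ) = 0 := by linear_combination hA' + hB'
            norm_num at this
      · rintro (⟨hi, hjk⟩ | ⟨hi, hjk⟩)
        · subst hi
          refine ⟨?_, ?_, ?_⟩
          · linear_combination (xj + xk) * hjk
          · linear_combination 2 * hjk
          · linear_combination 2 * hjk
        · subst hi
          refine ⟨?_, ?_, ?_⟩
          · linear_combination (xj - xk) * hjk
          · linear_combination 2 * hjk
          · linear_combination -2 * hjk
    · rintro ⟨⟨h1, _⟩, ⟨h2, _⟩⟩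
      have : (4 : ℂ) = 0 := by linear_combination h2 - h1
      norm_num at this
  · intro θi θj θk θ4
    constructor
    · rintro ⟨h1, h2, h3, h4⟩
      simp only [quartic] at h1 h3
      rw [deriv_quartic] at h2 h4
      -- Q(2) = (θj - θk)², Q(-2) = (θj + θk)²
      have e1 : (θj - θk) ^ 2 = 0 := by linear_combination h1
      have e2 : (θj + θk) ^ 2 = 0 := by linear_combination h3
      have f1 : θj - θk = 0 := by
        exact pow_eq_zero_iff (by norm_num) |>.mp e1
      have f2 : θj + θk = 0 := by
        exact pow_eq_zero_iff (by norm_num) |>.mp e2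
      have hj : θj = 0 := by linear_combination (f1 + f2) / 2
      have hk : θk = 0 := by linear_combination (f2 - f1) / 2
      have hi : θi = 0 := by
        linear_combination (-h2 - h4) / 16 - (θk / 8) * hj
      have h4' : θ4 = -4 := by
        linear_combination (h2 - h4) / 8
      exact ⟨hi, hj, hk, h4'⟩
    · rintro ⟨hi, hj, hk, h4⟩
      subst hi; subst hj; subst hk; subst h4
      rw [deriv_quartic, deriv_quartic]
      simp only [quartic]
      norm_num
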